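/- Let n ≥ 2 and let Ω ⊆ ℝⁿ be a set containing the closure of Q₂. Let v : Ω → ℝ be continuous and suppose x* ∈ Q_{1/(4√n)} satisfies v(x) ≥ 1 − (1/(2n))|x−x*|² for all x ∈ Ω, with equality at x = x*. Set K = 32. Then for every y ∈ Q_{1/(4√n)}: (a) the function P(x) = v(x) + (K/2)|x−y|² attains its minimum over the closure of Q₁ at some point x₀ lying in the open cube Q₁; (b) any such minimizer x₀ satisfies v(z) + (K/2)|z−y|² ≥ v(x₀) + (K/2)|x₀−y|² for all z ∈ Ω; and (c) consequently x₀ ∈ G⁻₃₂(v,Ω), with touching slope p = K·(y − x₀), i.e. v(z) ≥ v(x₀) + p·(z−x₀) − (K/2)|z−x₀|² for all z ∈ Ω. -/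
import Mathlib


open MeasureTheory Metric
open scoped InnerProductSpace ENNReal

noncomputable section

abbrev Euc (n : ℕ) := EuclideanSpace ℝ (Fin n)

/-- Loewner order -/
def matLE {n : ℕ} (A B : Matrix (Fin n) (Fin n) ℝ) : Prop := (B - A).PosSemidef

/-- Pucci minimal operator -/
def pucciInf {n : ℕ} (lam Lam : ℝ) (M : Matrix (Fin n) (Fin n) ℝ) : ℝ :=
  sInf {t : ℝ | ∃ A : Matrix (Fin n) (Fin n) ℝ,
    A.IsSymm ∧ matLE (lam • 1) A ∧ matLE A (Lam • 1) ∧ t = (A * M).trace}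

/-- Hessian matrix via second iterated Fréchet derivative -/
def hessianMatrix {n : ℕ} (φ : Euc n → ℝ) (x : Euc n) : Matrix (Fin n) (Fin n) ℝ :=
  Matrix.of fun i j =>
    iteratedFDeriv ℝ 2 φ x ![EuclideanSpace.single i 1, EuclideanSpace.single j 1]

/-- viscosity supersolution of M⁻(D²v) ≤ 0 -/
def ViscSupersol {n : ℕ} (lam Lam : ℝ) (Ω : Set (Euc n)) (v : Euc n → ℝ) : Prop :=
  ∀ x₀ ∈ Ω, ∀ φ : Euc n → ℝ,
    (∃ U : Set (Euc n), IsOpen U ∧ x₀ ∈ U ∧ ContDiffOn ℝ 2 φ U) →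
    IsLocalMinOn (fun x => v x - φ x) Ω x₀ →
    pucciInf lam Lam (hessianMatrix φ x₀) ≤ 0

def Gm {n : ℕ} (K : ℝ) (v : Euc n → ℝ) (Ω : Set (Euc n)) : Set (Euc n) :=
  {xb | xb ∈ Ω ∧ ∃ p : Euc n, ∀ x ∈ Ω, v x ≥ v xb + ⟪p, x - xb⟫_ℝ - K / 2 * ‖x - xb‖ ^ 2}

def Am {n : ℕ} (K : ℝ) (v : Euc n → ℝ) (Ω : Set (Euc n)) : Set (Euc n) := Ω \ Gm K v Ω

/-- open cube of side r centered at x -/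
def cube {n : ℕ} (r : ℝ) (x : Euc n) : Set (Euc n) := {y | ∀ i, |y i - x i| < r / 2}


lemma norm_sq_eq (n : ℕ) (x : Euc n) : ‖x‖^2 = ∑ i, (x i)^2 := by
  rw [EuclideanSpace.norm_eq, Real.sq_sqrt (by positivity)]
  simp [Real.norm_eq_abs, sq_abs]

lemma coord_le_norm (n : ℕ) (x : Euc n) (i : Fin n) : |x i| ≤ ‖x‖ := by
  have h1 : |x i|^2 ≤ ‖x‖^2 := by
    rw [norm_sq_eq]
    rw [sq_abs]
    exact Finset.single_le_sum (f := fun j => (x j)^2) (fun j _ => sq_nonneg _)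
      (Finset.mem_univ i)
  exact (pow_le_pow_iff_left₀ (abs_nonneg _) (norm_nonneg _) two_ne_zero).mp h1

lemma small_norm (n : ℕ) (hn : 1 ≤ n) (x : Euc n)
    (hx : x ∈ cube (1 / (4 * Real.sqrt n)) 0) : ‖x‖ ≤ 1/8 := by
  have hn0 : (0:ℝ) < n := by exact_mod_cast Nat.lt_of_lt_of_le Nat.zero_lt_one hn
  have hs : (0:ℝ) < Real.sqrt n := Real.sqrt_pos.mpr hn0
  have hsq : (Real.sqrt n)^2 = n := Real.sq_sqrt hn0.le
  have hco : ∀ i, |x i| ≤ 1/(8*Real.sqrt n) := by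
    intro i
    have := hx i
    simp only [PiLp.zero_apply, sub_zero] at this
    have h2 : (1 / (4 * Real.sqrt n)) / 2 = 1/(8*Real.sqrt n) := by ring
    linarith [this, h2 ▸ this]
  have hsum : ‖x‖^2 ≤ (1/8:ℝ)^2 := by
    rw [norm_sq_eq]
    calc ∑ i, (x i)^2 ≤ ∑ _i : Fin n, (1/(8*Real.sqrt n))^2 := by
          refine Finset.sum_le_sum fun i _ => ?_
          rw [← sq_abs]
          exact pow_le_pow_left₀ (abs_nonneg _) (hco i) 2
      _ = n * (1/(8*Real.sqrt n))^2 := by rw [Finset.sum_const, Finset.card_univ, Fintype.card_fin, nsmul_eq_mul]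
      _ = (1/8:ℝ)^2 := by
          field_simp
          nlinarith [hsq]
  exact (pow_le_pow_iff_left₀ (norm_nonneg _) (by norm_num) two_ne_zero).mp hsum

lemma closure_cube_subset (n : ℕ) (r : ℝ) :
    closure (cube r (0:Euc n)) ⊆ {x | ∀ i, |x i| ≤ r/2} := by
  apply closure_minimal
  · intro x hx i
    have := hx i
    simp only [PiLp.zero_apply, sub_zero] at this
    exact this.le
  · have : {x : Euc n | ∀ i, |x i| ≤ r/2} = ⋂ i, (fun x : Euc n => x i) ⁻¹' {t | |t| ≤ r/2} := by
      ext x; simp [Set.mem_iInter]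
    rw [this]
    exact isClosed_iInter fun i =>
      (isClosed_le continuous_abs continuous_const).preimage (EuclideanSpace.proj i).continuous

lemma compact_closure_cube (n : ℕ) : IsCompact (closure (cube (1:ℝ) (0:Euc n))) := by
  have hsub : closure (cube (1:ℝ) (0:Euc n)) ⊆ Metric.closedBall 0 (Real.sqrt n) := by
    intro x hx
    rw [Metric.mem_closedBall, dist_zero_right]
    have h := closure_cube_subset n 1 hx
    have h2 : ‖x‖^2 ≤ (Real.sqrt n)^2 := by
      rw [norm_sq_eq, Real.sq_sqrt (by positivity)]
      calc ∑ i, (x i)^2 ≤ ∑ _i : Fin n, (1:ℝ) := by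
            refine Finset.sum_le_sum fun i _ => ?_
            have := h i
            nlinarith [abs_nonneg (x i), sq_abs (x i)]
        _ = n := by simp
    exact (pow_le_pow_iff_left₀ (norm_nonneg _) (Real.sqrt_nonneg _) two_ne_zero).mp h2
  exact (isCompact_closedBall _ _).of_isClosed_subset isClosed_closure hsub

/-- sliding-paraboloid contact-point claim (Claim 1 in the proof of the
measure estimate), with K = 32. -/
theorem stmt_18 (n : ℕ) (hn : 2 ≤ n) (Ω : Set (Euc n)) (hQ : closure (cube 2 0) ⊆ Ω)
    (v : Euc n → ℝ) (hv : ContinuousOn v Ω)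
    (xs : Euc n) (hxs : xs ∈ cube (1 / (4 * Real.sqrt n)) 0)
    (htouch : ∀ x ∈ Ω, v x ≥ 1 - 1 / (2 * n) * ‖x - xs‖ ^ 2)
    (heq : v xs = 1) :
    ∀ y ∈ cube (1 / (4 * Real.sqrt n)) (0 : Euc n),
      -- (a) the minimum of P(x) = v(x) + (K/2)|x−y|² over the closed unit cube is
      -- attained at a point of the open unit cube
      (∃ x₀ ∈ cube (1 : ℝ) (0 : Euc n), ∀ z ∈ closure (cube (1 : ℝ) (0 : Euc n)),
          v x₀ + 32 / 2 * ‖x₀ - y‖ ^ 2 ≤ v z + 32 / 2 * ‖z - y‖ ^ 2) ∧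
      -- (b) and (c): any minimizer over the closed unit cube is a global minimizer
      -- over Ω and belongs to G⁻₃₂(v,Ω) with touching slope p = K(y − x₀)
      (∀ x₀ ∈ closure (cube (1 : ℝ) (0 : Euc n)),
        (∀ z ∈ closure (cube (1 : ℝ) (0 : Euc n)),
            v x₀ + 32 / 2 * ‖x₀ - y‖ ^ 2 ≤ v z + 32 / 2 * ‖z - y‖ ^ 2) →
        (∀ z ∈ Ω, v x₀ + 32 / 2 * ‖x₀ - y‖ ^ 2 ≤ v z + 32 / 2 * ‖z - y‖ ^ 2) ∧
        (∀ z ∈ Ω, v z ≥ v x₀ + ⟪(32 : ℝ) • (y - x₀), z - x₀⟫_ℝ - 32 / 2 * ‖z - x₀‖ ^ 2) ∧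
        x₀ ∈ Gm 32 v Ω) := by
  intro y hy
  have hnn : (2:ℝ) ≤ (n:ℝ) := by exact_mod_cast hn
  have hn1 : 1 ≤ n := le_trans one_le_two hn
  have hys : ‖y‖ ≤ 1/8 := small_norm n hn1 y hy
  have hxs8 : ‖xs‖ ≤ 1/8 := small_norm n hn1 xs hxs
  have hb : ‖xs - y‖ ≤ 1/4 := by
    calc ‖xs - y‖ ≤ ‖xs‖ + ‖y‖ := norm_sub_le _ _
      _ ≤ 1/4 := by linarith
  -- memberships
  have hcl1 : closure (cube (1:ℝ) (0:Euc n)) ⊆ Ω := by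
    intro x hx
    apply hQ
    apply subset_closure
    intro i
    have h := closure_cube_subset n 1 hx i
    simp only [PiLp.zero_apply, sub_zero]
    norm_num at h ⊢
    linarith
  have hxs_cube : xs ∈ cube (1:ℝ) (0:Euc n) := by
    intro i
    simp only [PiLp.zero_apply, sub_zero]
    have := coord_le_norm n xs i
    norm_num
    linarith
  have hxs_cl : xs ∈ closure (cube (1:ℝ) (0:Euc n)) := subset_closure hxs_cube
  -- key lemma: any point of Ω with a coordinate ≥ 1/2 has strictly larger P value than xs
  have key : ∀ z ∈ Ω, (∃ i, (1:ℝ)/2 ≤ |z i|) →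
      1 + 32/2 * ‖xs - y‖^2 < v z + 32/2 * ‖z - y‖^2 := by
    rintro z hz ⟨i, hi⟩
    have hvz := htouch z hz
    have ha : (3:ℝ)/8 ≤ ‖z - y‖ := by
      have h1 : |z i| - |y i| ≤ |z i - y i| := abs_sub_abs_le_abs_sub _ _
      have h2 : |(z - y) i| ≤ ‖z - y‖ := coord_le_norm n (z - y) i
      have h3 : (z - y) i = z i - y i := by simp
      have h4 : |y i| ≤ ‖y‖ := coord_le_norm n y i
      rw [h3] at h2
      linarith
    have htri : ‖z - xs‖ ≤ ‖z - y‖ + ‖xs - y‖ := by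
      have h : z - xs = (z - y) - (xs - y) := by abel
      rw [h]; exact norm_sub_le _ _
    have hq : ‖z - xs‖^2 ≤ (‖z - y‖ + ‖xs - y‖)^2 :=
      pow_le_pow_left₀ (norm_nonneg _) htri 2
    have hc : 1/(2*(n:ℝ)) * ‖z - xs‖^2 ≤ 1/4 * (‖z - y‖ + ‖xs - y‖)^2 := by
      have h5 : 1/(2*(n:ℝ)) ≤ 1/4 := by
        rw [div_le_div_iff₀ (by linarith) (by norm_num)]; linarith
      have h6 := mul_le_mul h5 hq (sq_nonneg _) (by norm_num : (0:ℝ) ≤ 1/4)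
      linarith
    have hb0 : (0:ℝ) ≤ ‖xs - y‖ := norm_nonneg _
    set a := ‖z - y‖
    set b := ‖xs - y‖
    have hab : 0 ≤ a - b := by linarith
    nlinarith [hvz, hc, mul_nonneg (by linarith : (0:ℝ) ≤ a - 3/8) (by linarith : (0:ℝ) ≤ a + 3/8),
      mul_nonneg (by linarith : (0:ℝ) ≤ 1/4 - b) (by linarith : (0:ℝ) ≤ 1/4 + b),
      mul_nonneg (by linarith : (0:ℝ) ≤ a) hab]
  -- existence of a minimizer
  have hcont : ContinuousOn (fun z => v z + 32/2 * ‖z - y‖^2) (closure (cube (1:ℝ) (0:Euc n))) :=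
    (hv.mono hcl1).add (Continuous.continuousOn
      (continuous_const.mul (((continuous_id.sub continuous_const).norm).pow 2)))
  obtain ⟨x₀, hx₀cl, hmin⟩ := (compact_closure_cube n).exists_isMinOn ⟨xs, hxs_cl⟩ hcont
  have hmin' : ∀ z ∈ closure (cube (1:ℝ) (0:Euc n)),
      v x₀ + 32/2 * ‖x₀ - y‖^2 ≤ v z + 32/2 * ‖z - y‖^2 := fun z hz => isMinOn_iff.mp hmin z hz
  have hx₀cube : x₀ ∈ cube (1:ℝ) (0:Euc n) := by
    by_contra hcon
    have hex : ∃ i, (1:ℝ)/2 ≤ |x₀ i| := by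
      by_contra hcon2
      push_neg at hcon2
      exact hcon (fun i => by simp only [PiLp.zero_apply, sub_zero]; norm_num; linarith [hcon2 i])
    have hk := key x₀ (hcl1 hx₀cl) hex
    have h1 := hmin' xs hxs_cl
    rw [heq] at h1
    linarith
  refine ⟨⟨x₀, hx₀cube, hmin'⟩, ?_⟩
  intro x₁ hx₁ hminP
  have hglobal : ∀ z ∈ Ω, v x₁ + 32/2 * ‖x₁ - y‖^2 ≤ v z + 32/2 * ‖z - y‖^2 := by
    intro z hz
    by_cases hz1 : z ∈ closure (cube (1:ℝ) (0:Euc n))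
    · exact hminP z hz1
    · have hex : ∃ i, (1:ℝ)/2 ≤ |z i| := by
        by_contra hcon
        push_neg at hcon
        exact hz1 (subset_closure (fun i => by
          simp only [PiLp.zero_apply, sub_zero]; norm_num; linarith [hcon i]))
      have hk := key z hz hex
      have h1 := hminP xs hxs_cl
      rw [heq] at h1
      linarith
  have hpara : ∀ z ∈ Ω, v z ≥ v x₁ + ⟪(32:ℝ) • (y - x₁), z - x₁⟫_ℝ - 32/2 * ‖z - x₁‖^2 := by
    intro z hz
    have h0 := hglobal z hz
    have hid : ‖z - y‖^2 = ‖z - x₁‖^2 + 2*⟪z - x₁, x₁ - y⟫_ℝ + ‖x₁ - y‖^2 := by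
      have h := norm_add_sq_real (z - x₁) (x₁ - y)
      rw [sub_add_sub_cancel] at h
      linarith
    have hin : ⟪(32:ℝ) • (y - x₁), z - x₁⟫_ℝ = -(32 * ⟪z - x₁, x₁ - y⟫_ℝ) := by
      rw [real_inner_smul_left, real_inner_comm]
      rw [show x₁ - y = -(y - x₁) from (neg_sub y x₁).symm, inner_neg_right]
      ring
    linarith
  exact ⟨hglobal, hpara, hcl1 hx₁, (32:ℝ) • (y - x₁), hpara⟩
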